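/- Let (𝒟,K) and (𝒞,J) be small sites and p : 𝒟 ⥤ 𝒞 a comorphism of sites. Assume 𝒟 has an initial object 0 such that p(0) is initial in 𝒞, the empty sieve on 0 is K-covering, and the empty sieve on p(0) is J-covering. On the comma category Comma p (𝟭 𝒞), whose objects are triples (d, c, u : p(d) ⟶ c), declare a sieve S on an object (d, c, u) to be covering if and only if the image (pushforward) sieve of S along the first projection to 𝒟 is K-covering on d and the image sieve of S along the second projection to 𝒞 is J-covering on c. Then this assignment defines a Grothendieck topology (K/J) on Comma p (𝟭 𝒞). -/

import Mathlib

open CategoryTheory Limits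

namespace CommaTopologyAux

variable {D : Type*} [Category D] {C : Type*} [Category C] (p : D ⥤ C)

@[simps] def objFst (d : D) : Comma p (𝟭 C) := ⟨d, p.obj d, 𝟙 _⟩

@[simps] def homFst {d : D} {X : Comma p (𝟭 C)} (g : d ⟶ X.left) : objFst p d ⟶ X where
  left := g
  right := p.map g ≫ X.hom
  w := by simp [objFst]

lemma homFst_comp {X Y : Comma p (𝟭 C)} (f : Y ⟶ X) {d : D} (g : d ⟶ Y.left) :
    homFst p g ≫ f = homFst p (g ≫ f.left) := by
  have hw := f.w
  ext
  · rfl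
  · simp only [Comma.comp_right, homFst_right, Functor.map_comp, Category.assoc, hw]
    exact (Category.assoc _ _ _).trans ((congrArg (p.map g ≫ ·) hw.symm).trans (Category.assoc _ _ _).symm)

@[simps] def sieveFst {X : Comma p (𝟭 C)} (S : Sieve X) : Sieve X.left where
  arrows d g := S (homFst p g)
  downward_closed := by
    intro d d' g hg e
    have h : homFst p (e ≫ g) = homFst p e ≫ homFst p g := by
      exact (homFst_comp p (homFst p g) e).symm
    rw [h]
    exact S.downward_closed hg _

lemma pushforward_fst_eq {X : Comma p (𝟭 C)} (S : Sieve X) :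
    S.functorPushforward (Comma.fst p (𝟭 C)) = sieveFst p S := by
  ext d g
  constructor
  · rintro ⟨Z, t, h, ht, rfl⟩
    have heq : homFst p (h ≫ (Comma.fst p (𝟭 C)).map t) = homFst p h ≫ t := by
      rw [homFst_comp]; rfl
    show S (homFst p (h ≫ (Comma.fst p (𝟭 C)).map t))
    rw [heq]
    exact S.downward_closed ht _
  · intro hg
    exact ⟨objFst p d, homFst p g, 𝟙 d, hg, (Category.id_comp g).symm⟩

lemma sieveFst_pullback {X Y : Comma p (𝟭 C)} (f : Y ⟶ X) (S : Sieve X) :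
    sieveFst p (S.pullback f) = (sieveFst p S).pullback f.left := by
  ext d g
  show S (homFst p g ≫ f) ↔ S (homFst p (g ≫ f.left))
  rw [homFst_comp]

variable {O : D} (hO : IsInitial O) (hpO : IsInitial (p.obj O))

@[simps] def objSnd (c : C) : Comma p (𝟭 C) := ⟨O, c, hpO.to c⟩

@[simps] def homSnd {c : C} {X : Comma p (𝟭 C)} (φ : c ⟶ X.right) :
    objSnd p hpO c ⟶ X where
  left := hO.to X.left
  right := φ
  w := hpO.hom_ext _ _

lemma homSnd_comp {X Y : Comma p (𝟭 C)} (f : Y ⟶ X) {c : C} (φ : c ⟶ Y.right) :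
    homSnd p hO hpO φ ≫ f = homSnd p hO hpO (φ ≫ f.right) := by
  ext
  · exact hO.hom_ext _ _
  · rfl

@[simps] def sieveSnd {X : Comma p (𝟭 C)} (S : Sieve X) : Sieve X.right where
  arrows c φ := S (homSnd p hO hpO φ)
  downward_closed := by
    intro c c' φ hφ ψ
    have h : homSnd p hO hpO (ψ ≫ φ) = homSnd p hO hpO ψ ≫ homSnd p hO hpO φ := by
      exact (homSnd_comp p hO hpO (homSnd p hO hpO φ) ψ).symm
    rw [h]
    exact S.downward_closed hφ _

lemma pushforward_snd_eq {X : Comma p (𝟭 C)} (S : Sieve X) :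
    S.functorPushforward (Comma.snd p (𝟭 C)) = sieveSnd p hO hpO S := by
  ext c φ
  constructor
  · rintro ⟨Z, t, h, ht, rfl⟩
    have heq : homSnd p hO hpO (h ≫ (Comma.snd p (𝟭 C)).map t) = homSnd p hO hpO h ≫ t := by
      rw [homSnd_comp]; rfl
    show S (homSnd p hO hpO (h ≫ (Comma.snd p (𝟭 C)).map t))
    rw [heq]
    exact S.downward_closed ht _
  · intro hφ
    exact ⟨objSnd p hpO c, homSnd p hO hpO φ, 𝟙 c, hφ, (Category.id_comp φ).symm⟩

lemma sieveSnd_pullback {X Y : Comma p (𝟭 C)} (f : Y ⟶ X) (S : Sieve X) :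
    sieveSnd p hO hpO (S.pullback f) = (sieveSnd p hO hpO S).pullback f.right := by
  ext c φ
  show S (homSnd p hO hpO φ ≫ f) ↔ S (homSnd p hO hpO (φ ≫ f.right))
  rw [homSnd_comp]

end CommaTopologyAux

open CommaTopologyAux

/-- A functor `p : (𝒟, K) ⥤ (𝒞, J)` is a comorphism of sites if for every `J`-covering sieve
`S` on `p(d)`, the sieve `{g | p(g) ∈ S}` is `K`-covering. -/
def IsComorphismOfSites {D : Type*} [Category D] {C : Type*} [Category C] (p : D ⥤ C)
    (K : GrothendieckTopology D) (J : GrothendieckTopology C) : Prop :=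
  ∀ (d : D) (S : Sieve (p.obj d)), S ∈ J (p.obj d) → S.functorPullback p ∈ K d

/-- Given a comorphism of sites `p : (𝒟,K) ⟶ (𝒞,J)` such that `𝒟` has an initial object `O`
with `p(O)` initial, the empty sieve on `O` being `K`-covering and the empty sieve on `p(O)`
being `J`-covering, declaring a sieve on an object of `Comma p (𝟭 𝒞)` to be covering iff its
image sieves under the two projections are `K`- resp. `J`-covering defines a Grothendieck
topology on `Comma p (𝟭 𝒞)`. -/
theorem exists_grothendieckTopology_on_comma
    {D : Type*} [Category D] {C : Type*} [Category C] (p : D ⥤ C)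
    (K : GrothendieckTopology D) (J : GrothendieckTopology C)
    (hp : IsComorphismOfSites p K J)
    (O : D) (hO : IsInitial O) (hpO : IsInitial (p.obj O))
    (hK0 : (⊥ : Sieve O) ∈ K O) (hJ0 : (⊥ : Sieve (p.obj O)) ∈ J (p.obj O)) :
    ∃ T : GrothendieckTopology (Comma p (𝟭 C)),
      ∀ (X : Comma p (𝟭 C)) (S : Sieve X),
        S ∈ T X ↔
          (S.functorPushforward (Comma.fst p (𝟭 C)) ∈ K X.left ∧
            S.functorPushforward (Comma.snd p (𝟭 C)) ∈ J X.right) := by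
  refine ⟨{
    sieves := fun X S =>
      S.functorPushforward (Comma.fst p (𝟭 C)) ∈ K X.left ∧
        S.functorPushforward (Comma.snd p (𝟭 C)) ∈ J X.right
    top_mem' := ?_
    pullback_stable' := ?_
    transitive' := ?_ }, fun X S => Iff.rfl⟩
  · intro X
    have h1 : sieveFst p (⊤ : Sieve X) = ⊤ := by ext; simp
    have h2 : sieveSnd p hO hpO (⊤ : Sieve X) = ⊤ := by ext; simp
    refine ⟨?_, ?_⟩
    · rw [pushforward_fst_eq, h1]; exact K.top_mem _
    · rw [pushforward_snd_eq p hO hpO, h2]; exact J.top_mem _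
  · intro X Y S f hS
    obtain ⟨hS1, hS2⟩ := hS
    rw [pushforward_fst_eq] at hS1
    rw [pushforward_snd_eq p hO hpO] at hS2
    refine ⟨?_, ?_⟩
    · rw [pushforward_fst_eq, sieveFst_pullback]
      exact K.pullback_stable _ hS1
    · rw [pushforward_snd_eq p hO hpO, sieveSnd_pullback]
      exact J.pullback_stable _ hS2
  · intro X S hS R hR
    obtain ⟨hS1, hS2⟩ := hS
    rw [pushforward_fst_eq] at hS1
    rw [pushforward_snd_eq p hO hpO] at hS2
    refine ⟨?_, ?_⟩
    · rw [pushforward_fst_eq]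
      refine K.transitive hS1 _ fun d g hg => ?_
      obtain ⟨h1, -⟩ := hR hg
      rw [pushforward_fst_eq, sieveFst_pullback] at h1
      exact h1
    · rw [pushforward_snd_eq p hO hpO]
      refine J.transitive hS2 _ fun c φ hφ => ?_
      obtain ⟨-, h2⟩ := hR hφ
      rw [pushforward_snd_eq p hO hpO, sieveSnd_pullback] at h2
      exact h2
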